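/- Let V be a four-dimensional real vector space equipped with a linear complex structure J (an endomorphism with J² = -id), and let ω be an alternating bilinear form on V satisfying ω(Jv,Jw) = -ω(v,w) for all v,w ∈ V. Then either ω = 0 or ω is nondegenerate. -/

import Mathlib

/-- Let `V` be a four-dimensional real vector space with a linear complex
structure `J` (an endomorphism with `J² = -id`), and let `ω` be an alternating bilinear
form on `V` which is `J`-anti-invariant, i.e. `ω (J v) (J w) = -ω v w`.
Then either `ω = 0` or `ω` is nondegenerate. -/
theorem antiInvariant_form_zero_or_nondegenerate
    (V : Type*) [AddCommGroup V] [Module ℝ V] [FiniteDimensional ℝ V]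
    (hdim : Module.finrank ℝ V = 4)
    (J : V →ₗ[ℝ] V) (hJ : J ∘ₗ J = -LinearMap.id)
    (ω : V →ₗ[ℝ] V →ₗ[ℝ] ℝ)
    (halt : ∀ v w : V, ω v w = -ω w v)
    (hanti : ∀ v w : V, ω (J v) (J w) = -ω v w) :
    ω = 0 ∨ (∀ v : V, (∀ w : V, ω v w = 0) → v = 0) := by
  by_cases hω : ω = 0
  · exact Or.inl hω
  right
  intro v hv
  by_contra hv0
  have hJJ : ∀ x : V, J (J x) = -x := by
    intro x
    have := LinearMap.ext_iff.mp hJ x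
    simpa using this
  -- ω x (J x) = 0
  have hA : ∀ x : V, ω x (J x) = 0 := by
    intro x
    have h1 := hanti x (J x)
    rw [hJJ x] at h1
    have h2 := halt (J x) x
    simp only [map_neg, LinearMap.neg_apply] at h1
    linarith
  -- ω (J x) y = ω x (J y)
  have hswap : ∀ x y : V, ω (J x) y = ω x (J y) := by
    intro x y
    have h1 := hanti x (J y)
    rw [hJJ y] at h1
    simp only [map_neg] at h1
    linarith
  have hJv : ∀ w : V, ω (J v) w = 0 := by
    intro w
    rcases (fun w => hJJ w) with _
    have : ω (J v) (J (J w)) = ω v (J (J (J w))) := hswap v (J (J w))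
    -- simpler: ω (J v) w = ω v (J w) = 0
    rw [hswap v w, hv (J w)]
  -- sum of squares trick
  have hsq : ∀ (x : V) (a b : ℝ), a • x + b • J x = 0 → (a ^ 2 + b ^ 2) • x = 0 := by
    intro x a b h
    have heq : (a ^ 2 + b ^ 2) • x = a • (a • x + b • J x) - b • J (a • x + b • J x) := by
      rw [map_add, map_smul, map_smul, hJJ x]; module
    rw [heq, h]; simp
  have hsqzero : ∀ a b : ℝ, a ^ 2 + b ^ 2 = 0 → a = 0 ∧ b = 0 := by
    intro a b h
    constructor <;> nlinarith [sq_nonneg a, sq_nonneg b]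
  set W : Submodule ℝ V := Submodule.span ℝ {v, J v} with hW
  have hvW : v ∈ W := Submodule.subset_span (by simp)
  have hJvW : J v ∈ W := Submodule.subset_span (by simp)
  have hWJ : ∀ x ∈ W, J x ∈ W := by
    intro x hx
    have : Submodule.map J W ≤ W := by
      rw [hW, Submodule.map_span, Submodule.span_le]
      rintro y hy
      simp only [Set.image_insert_eq, Set.image_singleton, Set.mem_insert_iff,
        Set.mem_singleton_iff] at hy
      rcases hy with rfl | rfl
      · exact hJvW
      · rw [hJJ v]; exact neg_mem hvW
    exact this ⟨x, hx, rfl⟩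
  -- W ≠ ⊤
  have hWtop : W ≠ ⊤ := by
    intro htop
    have h1 : Module.finrank ℝ W ≤ 2 := by
      classical
      refine (finrank_span_le_card ({v, J v} : Set V)).trans ?_
      rw [Set.toFinset_insert, Set.toFinset_singleton]
      exact (Finset.card_insert_le _ _).trans (by simp)
    rw [htop, finrank_top, hdim] at h1
    omega
  obtain ⟨u, hu⟩ : ∃ u : V, u ∉ W := by
    by_contra h
    push_neg at h
    exact hWtop (Submodule.eq_top_iff'.mpr h)
  -- linear independence of v, Jv, u, Ju
  have hli : LinearIndependent ℝ ![v, J v, u, J u] := by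
    rw [Fintype.linearIndependent_iff]
    intro g hg
    rw [Fin.sum_univ_four] at hg
    simp only [Matrix.cons_val_zero, Matrix.cons_val_one, Matrix.head_cons,
      Matrix.cons_val_two, Matrix.tail_cons, Matrix.cons_val_three] at hg
    have hmem : g 2 • u + g 3 • J u ∈ W := by
      have : g 2 • u + g 3 • J u = -(g 0 • v + g 1 • J v) := by
        have := hg; linear_combination (norm := module) this
      rw [this]
      exact neg_mem (add_mem (W.smul_mem _ hvW) (W.smul_mem _ hJvW))
    have hWu : (g 2 ^ 2 + g 3 ^ 2) • u ∈ W := by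
      have h1 : J (g 2 • u + g 3 • J u) ∈ W := hWJ _ hmem
      rw [map_add, map_smul, map_smul, hJJ u] at h1
      have h2 : g 2 • (g 2 • u + g 3 • J u) - g 3 • (g 2 • J u + g 3 • -u) ∈ W :=
        sub_mem (W.smul_mem _ hmem) (W.smul_mem _ h1)
      have heq : (g 2 ^ 2 + g 3 ^ 2) • u
          = g 2 • (g 2 • u + g 3 • J u) - g 3 • (g 2 • J u + g 3 • -u) := by
        module
      rw [heq]; exact h2
    have h23 : g 2 = 0 ∧ g 3 = 0 := by
      by_contra hc
      have hne : g 2 ^ 2 + g 3 ^ 2 ≠ 0 := fun h => hc (hsqzero _ _ h)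
      have : u ∈ W := by
        have := W.smul_mem (g 2 ^ 2 + g 3 ^ 2)⁻¹ hWu
        rwa [smul_smul, inv_mul_cancel₀ hne, one_smul] at this
      exact hu this
    obtain ⟨h2, h3⟩ := h23
    have hg' : g 0 • v + g 1 • J v = 0 := by
      rw [h2, h3] at hg
      simpa using hg
    have h01 : (g 0 ^ 2 + g 1 ^ 2) • v = 0 := hsq v _ _ hg'
    have h01z : g 0 ^ 2 + g 1 ^ 2 = 0 := by
      by_contra hc
      exact hv0 ((smul_eq_zero.mp h01).resolve_left hc)
    obtain ⟨h0, h1⟩ := hsqzero _ _ h01z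
    intro i
    fin_cases i <;> assumption
  have hcard : Fintype.card (Fin 4) = Module.finrank ℝ V := by simp [hdim]
  let b : Module.Basis (Fin 4) ℝ V := basisOfLinearIndependentOfCardEqFinrank hli hcard
  have hb : ⇑b = ![v, J v, u, J u] := coe_basisOfLinearIndependentOfCardEqFinrank hli hcard
  apply hω
  refine b.ext fun i => b.ext fun j => ?_
  have huu : ω u u = 0 := by linarith [halt u u]
  have huJu : ω u (J u) = 0 := hA u
  have hJuu : ω (J u) u = 0 := by rw [halt, huJu]; ring
  have hJuJu : ω (J u) (J u) = 0 := by linarith [halt (J u) (J u)]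
  have hxv : ∀ x : V, ω x v = 0 := fun x => by rw [halt, hv]; ring
  have hxJv : ∀ x : V, ω x (J v) = 0 := fun x => by rw [halt, hJv]; ring
  fin_cases i <;> fin_cases j <;>
    simp [hb, hv, hJv, huu, huJu, hJuu, hJuJu, hxv, hxJv]
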